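/- Let A = (a_{ij}) be a p×p positive semidefinite Hermitian matrix with real nonnegative diagonal entries, and let I = (I_{ij}) be a real symmetric p×p matrix with I_{ij} ≥ 0 whenever i ≠ j. If Σ_{i,j} a_{ij} I_{ij} = 0 (this sum is automatically real), then Σ_{i,j} √(a_{ii}) √(a_{jj}) I_{ij} ≥ 0. -/
import Mathlib


open scoped BigOperators ComplexOrder

/-- If `A` is a positive semidefinite Hermitian matrix (with real nonnegative diagonal) and
`B` is a real symmetric matrix with nonnegative off-diagonal entries such that
`∑ i j, A i j * B i j = 0`, then `∑ i j, √(A i i) * √(A j j) * B i j ≥ 0`. -/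
theorem sqrt_diag_quadratic_nonneg
    {p : ℕ} (A : Matrix (Fin p) (Fin p) ℂ) (hA : A.PosSemidef)
    (hdiag : ∀ i, (A i i).im = 0 ∧ 0 ≤ (A i i).re)
    (B : Matrix (Fin p) (Fin p) ℝ) (hBsymm : B.IsSymm)
    (hBoff : ∀ i j, i ≠ j → 0 ≤ B i j)
    (hsum : ∑ i, ∑ j, A i j * (B i j : ℂ) = 0) :
    0 ≤ ∑ i, ∑ j, Real.sqrt (A i i).re * Real.sqrt (A j j).re * B i j := by
  -- Step 1: the entrywise Cauchy–Schwarz inequality on the real parts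
  have key : ∀ i j, (A i j).re ≤ Real.sqrt (A i i).re * Real.sqrt (A j j).re := by
    intro i j
    by_cases hij : i = j
    · subst hij
      rw [Real.mul_self_sqrt (hdiag i).2]
    · set a := (A i i).re with ha
      set c := (A j j).re with hc
      set b := 2 * (A i j).re with hb
      have hq : ∀ t : ℝ, 0 ≤ a * (t * t) + b * t + c := by
        intro t
        have hji : A j i = star (A i j) := (hA.isHermitian.apply j i).symm
        have h := hA.re_dotProduct_nonneg
          (((t : ℂ) • (Pi.single i 1 : Fin p → ℂ) + (Pi.single j 1 : Fin p → ℂ)))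
        set x : Fin p → ℂ := (t : ℂ) • (Pi.single i 1 : Fin p → ℂ) + (Pi.single j 1 : Fin p → ℂ) with hxdef
        have hw : A.mulVec x = fun k => (t : ℂ) * A k i + A k j := by
          rw [hxdef, Matrix.mulVec_add, Matrix.mulVec_smul, Matrix.mulVec_single,
            Matrix.mulVec_single]
          funext k
          simp
        have hstar : star x = x := by
          funext k
          rw [hxdef]
          by_cases hk : k = i <;> by_cases hk' : k = j <;>
            simp [hk, hk', Ne.symm hij, Pi.single_apply, Complex.star_def, Complex.conj_ofReal]
        have hx : dotProduct (star x) (A.mulVec x) =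
            (t : ℂ) * (t : ℂ) * A i i + (t : ℂ) * A i j + (t : ℂ) * A j i + A j j := by
          rw [hstar, hw, hxdef, add_dotProduct, smul_dotProduct,
            single_dotProduct, single_dotProduct]
          simp only [smul_eq_mul, one_mul]
          ring
        rw [hx] at h
        simp only [RCLike.re_to_complex, Complex.add_re, Complex.mul_re,
          Complex.ofReal_re, Complex.ofReal_im, hji, Complex.conj_re, Complex.star_def,
          zero_mul, sub_zero, mul_zero, zero_sub, Complex.mul_im, zero_add, add_zero] at h
        rw [ha, hc, hb]
        nlinarith [h]
      have hd := discrim_le_zero hq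
      rw [discrim] at hd
      have ha0 : 0 ≤ a := (hdiag i).2
      have hc0 : 0 ≤ c := (hdiag j).2
      rw [hb] at hd
      have h1 : (A i j).re ^ 2 ≤ a * c := by nlinarith
      calc (A i j).re ≤ |(A i j).re| := le_abs_self _
        _ = Real.sqrt ((A i j).re ^ 2) := (Real.sqrt_sq_eq_abs _).symm
        _ ≤ Real.sqrt (a * c) := Real.sqrt_le_sqrt h1
        _ = Real.sqrt a * Real.sqrt c := Real.sqrt_mul ha0 _
  -- Step 2: real part of the hypothesis sum
  have hre : ∑ i, ∑ j, (A i j).re * B i j = 0 := by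
    have := congrArg Complex.re hsum
    simpa [Complex.mul_re] using this
  -- Step 3: combine
  have hnn : 0 ≤ ∑ i, ∑ j,
      (Real.sqrt (A i i).re * Real.sqrt (A j j).re - (A i j).re) * B i j := by
    refine Finset.sum_nonneg fun i _ => Finset.sum_nonneg fun j _ => ?_
    by_cases hij : i = j
    · subst hij
      rw [Real.mul_self_sqrt (hdiag i).2]
      simp
    · exact mul_nonneg (by linarith [key i j]) (hBoff i j hij)
  have hsplit : ∑ i, ∑ j,
      (Real.sqrt (A i i).re * Real.sqrt (A j j).re - (A i j).re) * B i j
      = (∑ i, ∑ j, Real.sqrt (A i i).re * Real.sqrt (A j j).re * B i j)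
        - ∑ i, ∑ j, (A i j).re * B i j := by
    simp [sub_mul, Finset.sum_sub_distrib]
  rw [hsplit, hre, sub_zero] at hnn
  exact hnn
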